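/- Let p be a prime and let S ⊂ ℚ_p be a scaling set. Then lim_{n→∞} 1_{p^{n}S}(ξ) = 0 for almost every ξ ∈ ℚ_p. -/

import Mathlib

open MeasureTheory Filter Topology Set
open scoped ENNReal ComplexConjugate

noncomputable section

namespace PadicScaling

attribute [local instance] Classical.propDecidable

variable (p : ℕ) [hp : Fact p.Prime]

instance : MeasurableSpace ℚ_[p] := borel _
instance : BorelSpace ℚ_[p] := ⟨rfl⟩

/-- The closed unit ball `ℤ_p = {x : |x|_p ≤ 1}` as a positive compact set. -/
def unitBallPC : TopologicalSpace.PositiveCompacts ℚ_[p] where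
  carrier := Metric.closedBall 0 1
  isCompact' := isCompact_closedBall 0 1
  interior_nonempty' :=
    ⟨0, interior_maximal Metric.ball_subset_closedBall Metric.isOpen_ball
      (Metric.mem_ball_self one_pos)⟩

/-- The Haar measure on `ℚ_p`, normalized so that `μ(ℤ_p) = 1`. -/
def μp : Measure ℚ_[p] := Measure.addHaarMeasure (unitBallPC p)

/-- The dilate `c·S = {c·x : x ∈ S}` of a set `S ⊆ ℚ_p`. -/
def dil (c : ℚ_[p]) (S : Set ℚ_[p]) : Set ℚ_[p] := (fun x => c * x) '' S

/-- The ball `B_γ(0) = {x : |x|_p ≤ p^γ}`. -/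
def ball (γ : ℤ) : Set ℚ_[p] := {x : ℚ_[p] | ‖x‖ ≤ (p : ℝ) ^ γ}

/-- The fractional part `{x}_p` of a `p`-adic number, as a rational number:
the unique rational `q` of the form `k/p^m` with `0 ≤ q < 1` and `x - q ∈ ℤ_p`. -/
def padicFract (x : ℚ_[p]) : ℚ :=
  if h : ∃ q : ℚ, (0 ≤ q ∧ q < 1 ∧ ∃ m k : ℕ, q = (k : ℚ) / (p : ℚ) ^ m) ∧
      ‖x - (q : ℚ_[p])‖ ≤ 1 then h.choose else 0

/-- The standard additive character `χ_p(x) = e^{2πi {x}_p}` of `ℚ_p`. -/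
def chi (x : ℚ_[p]) : ℂ := Complex.exp (2 * Real.pi * Complex.I * (padicFract p x : ℂ))

/-- The set `I_p` of `p`-adic fractional numbers, i.e. numbers of the form
`k/p^m` with `0 ≤ k < p^m`. -/
def Ip : Set ℚ_[p] := {x | ∃ m k : ℕ, k < p ^ m ∧ x = (k : ℚ_[p]) / (p : ℚ_[p]) ^ m}

/-- The Fourier transform `f̂(ξ) = ∫ χ_p(ξ x) f(x) dx` on `ℚ_p`. -/
def FT (f : ℚ_[p] → ℂ) : ℚ_[p] → ℂ := fun ξ => ∫ x, chi p (ξ * x) * f x ∂(μp p)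

/-- The inverse Fourier transform `f̌(ξ) = ∫ χ_p(-ξ x) f(x) dx` on `ℚ_p`. -/
def invFT (f : ℚ_[p] → ℂ) : ℚ_[p] → ℂ := fun ξ => ∫ x, chi p (-(ξ * x)) * f x ∂(μp p)

/-- `f`, as an element of `L²(ℚ_p)`, belongs to the subspace `V`. -/
def inL2 (f : ℚ_[p] → ℂ) (V : Submodule ℂ (Lp ℂ 2 (μp p))) : Prop :=
  ∃ hf : MemLp f 2 (μp p), hf.toLp f ∈ V

/-- The set of `L²`-classes of the translates `φ(· - a)`, `a ∈ I_p`. -/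
def translatesSet (φ : ℚ_[p] → ℂ) : Set (Lp ℂ 2 (μp p)) :=
  {h | ∃ a ∈ Ip p, ∃ hm : MemLp (fun x => φ (x - a)) 2 (μp p), h = hm.toLp _}

/-- A multiresolution analysis of `L²(ℚ_p)` with scaling function `φ`:
an increasing family of closed subspaces `V j` with dense union and trivial
intersection, compatible with dilation by `p⁻¹`, such that the `I_p`-translates
of `φ` form an orthonormal basis of `V 0`. -/
structure IsMRA (V : ℤ → Submodule ℂ (Lp ℂ 2 (μp p))) (φ : ℚ_[p] → ℂ) : Prop where
  mono : ∀ j : ℤ, V j ≤ V (j + 1)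
  closed : ∀ j : ℤ, IsClosed (V j : Set (Lp ℂ 2 (μp p)))
  dense_union : Dense (⋃ j : ℤ, (V j : Set (Lp ℂ 2 (μp p))))
  trivial_inter : (⋂ j : ℤ, (V j : Set (Lp ℂ 2 (μp p)))) = {0}
  dilate : ∀ (j : ℤ) (f : ℚ_[p] → ℂ),
    inL2 p f (V j) ↔ inL2 p (fun x => f ((p : ℚ_[p])⁻¹ * x)) (V (j + 1))
  phi_mem : inL2 p φ (V 0)
  orthonormal : ∀ a ∈ Ip p, ∀ b ∈ Ip p,
    ∫ x, φ (x - a) * conj (φ (x - b)) ∂(μp p) = if a = b then 1 else 0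
  complete : (Submodule.span ℂ (translatesSet p φ)).topologicalClosure = V 0

/-- `φ` is a scaling function of some MRA of `L²(ℚ_p)`. -/
def IsScalingFunction (φ : ℚ_[p] → ℂ) : Prop :=
  ∃ V : ℤ → Submodule ℂ (Lp ℂ 2 (μp p)), IsMRA p V φ

/-- A measurable set `S ⊆ ℚ_p` is a scaling set if `(1_S)ˇ` is a scaling function
of an MRA in `L²(ℚ_p)`. -/
def IsScalingSet (S : Set ℚ_[p]) : Prop :=
  MeasurableSet S ∧ IsScalingFunction p (invFT p (Set.indicator S 1))

/-- The dilated translate `x ↦ p^{j/2} ψ(p^{-j} x - a)`. -/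
def wdil (ψ : ℚ_[p] → ℂ) (j : ℤ) (a : ℚ_[p]) : ℚ_[p] → ℂ :=
  fun x => ((((p : ℝ) ^ ((j : ℝ) / 2) : ℝ)) : ℂ) * ψ ((p : ℚ_[p]) ^ (-j) * x - a)

/-- The `L²`-classes of the affine system `p^{j/2} ψ_n(p^{-j}· - a)`,
`j ∈ ℤ`, `a ∈ I_p`, `1 ≤ n ≤ L`. -/
def waveletSystem {L : ℕ} (ψ : Fin L → ℚ_[p] → ℂ) : Set (Lp ℂ 2 (μp p)) :=
  {h | ∃ (n : Fin L) (j : ℤ) (a : ℚ_[p]), a ∈ Ip p ∧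
        ∃ hm : MemLp (wdil p (ψ n) j a) 2 (μp p), h = hm.toLp _}

/-- `ψ_1, …, ψ_L` is a multiwavelet for `L²(ℚ_p)`: the affine system
`{p^{j/2} ψ_n(p^{-j}· - a)}` is an orthonormal basis of `L²(ℚ_p)`. -/
def IsMultiwavelet {L : ℕ} (ψ : Fin L → ℚ_[p] → ℂ) : Prop :=
  (∀ (n n' : Fin L) (j j' : ℤ) (a a' : ℚ_[p]), a ∈ Ip p → a' ∈ Ip p →
      ∫ x, wdil p (ψ n) j a x * conj (wdil p (ψ n') j' a' x) ∂(μp p) =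
        if n = n' ∧ j = j' ∧ a = a' then 1 else 0) ∧
  (Submodule.span ℂ (waveletSystem p ψ)).topologicalClosure = ⊤

/-- A measurable set `W ⊆ ℚ_p` is a multiwavelet set of order `L` if
`W = W_1 ∪ … ∪ W_L` and the functions `ψ_n` with `ψ̂_n = 1_{W_n}` form a
multiwavelet for `L²(ℚ_p)`. -/
def IsMultiwaveletSet (L : ℕ) (W : Set ℚ_[p]) : Prop :=
  MeasurableSet W ∧
  ∃ Wn : Fin L → Set ℚ_[p], (∀ n, MeasurableSet (Wn n)) ∧ W = ⋃ n, Wn n ∧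
    ∃ ψ : Fin L → ℚ_[p] → ℂ,
      (∀ n, FT p (ψ n) = Set.indicator (Wn n) 1) ∧ IsMultiwavelet p ψ

/-- A measurable set `G ⊆ ℚ_p` is a generalized scaling set of order `L` if
`μ(G) = L/(p-1)` and `p⁻¹G \ G` is a multiwavelet set of order `L`. -/
def IsGeneralizedScalingSet (L : ℕ) (G : Set ℚ_[p]) : Prop :=
  MeasurableSet G ∧ μp p G = (L : ℝ≥0∞) / ((p : ℝ≥0∞) - 1) ∧
  IsMultiwaveletSet p L (dil p (p : ℚ_[p])⁻¹ G \ G)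

/-- The class `D_N^M` of complex-valued functions on `ℚ_p` that are locally
constant with constancy parameter `p^{-M}` (i.e. `p^M`-periodic) and
supported on `B_N(0)`. -/
def DNM (M N : ℤ) : Set (ℚ_[p] → ℂ) :=
  {f | (∀ x y : ℚ_[p], ‖y‖ ≤ (p : ℝ) ^ (-M) → f (x + y) = f x) ∧
       ∀ x : ℚ_[p], f x ≠ 0 → ‖x‖ ≤ (p : ℝ) ^ N}

/-- The space `V_j`: closure of the span of `{φ(p^{-j}· - a) : a ∈ I_p}`. -/
def Vspace (φ : ℚ_[p] → ℂ) (j : ℤ) : Submodule ℂ (Lp ℂ 2 (μp p)) :=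
  (Submodule.span ℂ
    {h : Lp ℂ 2 (μp p) | ∃ a ∈ Ip p,
      ∃ hm : MemLp (fun x => φ ((p : ℚ_[p]) ^ (-j) * x - a)) 2 (μp p),
        h = hm.toLp _}).topologicalClosure

/-- `m` is a trigonometric polynomial of degree `d`: a finite linear
combination `Σ_{a ∈ F} c_a χ_p(a ·)` of characters with translations in `I_p`,
with `d` nontrivial terms. -/
def IsTrigPolyOfDeg (m : ℚ_[p] → ℂ) (d : ℕ) : Prop :=
  ∃ (F : Finset ℚ_[p]) (c : ℚ_[p] → ℂ), (↑F : Set ℚ_[p]) ⊆ Ip p ∧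
    (∀ a ∈ F, c a ≠ 0) ∧ (∀ ξ, m ξ = ∑ a ∈ F, c a * chi p (a * ξ)) ∧ F.card = d

/-- The set `J_{p,m}` of fractions `s_{-m}/p^m + … + s_{-1}/p` with digits in
`{0,…,p-1}` and `s_{-m} ≠ 0`; equivalently `{k/p^m : 0 ≤ k < p^m, p ∤ k}`. -/
def Jpm (m : ℕ) : Set ℚ_[p] :=
  {x | ∃ k : ℕ, k < p ^ m ∧ ¬ (p : ℕ) ∣ k ∧ x = (k : ℚ_[p]) / (p : ℚ_[p]) ^ m}


-- Auxiliary lemmas ---------------------------------------------------------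

lemma pnz : (p : ℚ_[p]) ≠ 0 := Nat.cast_ne_zero.mpr hp.out.ne_zero

instance : (μp p).IsAddHaarMeasure := Measure.isAddHaarMeasure_addHaarMeasure _

lemma dil_eq_preimage (c : ℚ_[p]) (hc : c ≠ 0) (A : Set ℚ_[p]) :
    dil p c A = (fun x => c⁻¹ * x) ⁻¹' A := by
  ext x
  constructor
  · rintro ⟨a, ha, rfl⟩
    simpa [Set.mem_preimage, inv_mul_cancel_left₀ hc] using ha
  · intro hx
    exact ⟨c⁻¹ * x, hx, by field_simp⟩

/-- Multiplication by a nonzero scalar as an additive equivalence. -/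
def mulEq (c : ℚ_[p]) (hc : c ≠ 0) : ℚ_[p] ≃+ ℚ_[p] where
  toFun := fun x => c * x
  invFun := fun x => c⁻¹ * x
  left_inv := fun x => by field_simp
  right_inv := fun x => by field_simp
  map_add' := mul_add c

lemma mulEq_symm_coe (c : ℚ_[p]) (hc : c ≠ 0) :
    ⇑(mulEq p c hc).symm = fun x => c⁻¹ * x := rfl

lemma mulEq_coe (c : ℚ_[p]) (hc : c ≠ 0) :
    ⇑(mulEq p c hc) = fun x => c * x := rfl

lemma scale_meas (A : Set ℚ_[p]) (hA : MeasurableSet A) :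
    μp p (dil p (p : ℚ_[p]) A) =
      μp p (Metric.closedBall (0:ℚ_[p]) ((p:ℝ)⁻¹)) * μp p A := by
  set g : ℚ_[p] → ℚ_[p] := fun x => (p : ℚ_[p])⁻¹ * x with hg
  have hgc : Continuous g := continuous_mul_left _
  set ν : Measure ℚ_[p] := (μp p).map g with hν
  have hmap : ∀ B : Set ℚ_[p], MeasurableSet B → ν B = μp p (g ⁻¹' B) := by
    intro B hB
    exact Measure.map_apply hgc.measurable hB
  haveI : ν.IsAddHaarMeasure := by
    have := AddEquiv.isAddHaarMeasure_map (μp p) (mulEq p ((p:ℚ_[p])⁻¹) (inv_ne_zero (pnz p)))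
      (by rw [mulEq_coe]; exact continuous_mul_left _)
      (by rw [mulEq_symm_coe]; exact continuous_mul_left _)
    rw [mulEq_coe] at this
    exact this
  have huniq : ν = ν (unitBallPC p) • μp p :=
    Measure.addHaarMeasure_unique ν (unitBallPC p)
  have hball : g ⁻¹' (Metric.closedBall (0:ℚ_[p]) 1) = Metric.closedBall (0:ℚ_[p]) ((p:ℝ)⁻¹) := by
    ext x
    have hnorm : ‖g x‖ = (p:ℝ) * ‖x‖ := by
      rw [hg]
      simp only [norm_mul, norm_inv, Padic.norm_p]
      rw [inv_inv]
    have hp1 : (1:ℝ) < p := by exact_mod_cast hp.out.one_lt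
    simp only [Metric.mem_closedBall, dist_zero_right, Set.mem_preimage, hnorm]
    constructor
    · intro h
      rw [← one_div]
      rw [le_div_iff₀' (by linarith)]
      exact h
    · intro h
      calc (p:ℝ) * ‖x‖ ≤ (p:ℝ) * (p:ℝ)⁻¹ := by
            exact mul_le_mul_of_nonneg_left h (by positivity)
        _ = 1 := by field_simp
  have hKν : ν (unitBallPC p) = μp p (Metric.closedBall (0:ℚ_[p]) ((p:ℝ)⁻¹)) := by
    rw [hmap _ (unitBallPC p).isCompact.measurableSet]
    exact congrArg (μp p) hball
  have hdil : dil p (p : ℚ_[p]) A = g ⁻¹' A := dil_eq_preimage p _ (pnz p) A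
  rw [hdil, ← hmap A hA, huniq]
  simp [hKν]

lemma c0_lt_one : μp p (Metric.closedBall (0:ℚ_[p]) ((p:ℝ)⁻¹)) < 1 := by
  set c0 := μp p (Metric.closedBall (0:ℚ_[p]) ((p:ℝ)⁻¹)) with hc0
  have hpinv : (0:ℝ) < (p:ℝ)⁻¹ := by
    have : (0:ℝ) < p := by exact_mod_cast hp.out.pos
    positivity
  have hpinv1 : ((p:ℝ))⁻¹ ≤ 1 := by
    have : (1:ℝ) ≤ p := by exact_mod_cast hp.out.one_le
    exact inv_le_one_of_one_le₀ this
  set B1 := Metric.ball (1:ℚ_[p]) ((p:ℝ)⁻¹) with hB1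
  have hsub : Metric.closedBall (0:ℚ_[p]) ((p:ℝ)⁻¹) ∪ B1 ⊆ Metric.closedBall (0:ℚ_[p]) 1 := by
    rintro x (hx | hx)
    · simp only [Metric.mem_closedBall, dist_zero_right] at hx ⊢
      exact hx.trans hpinv1
    · have hx' : ‖x - 1‖ < (p:ℝ)⁻¹ := by simpa [hB1, dist_eq_norm] using hx
      have he : x = (x - 1) + 1 := by ring
      simp only [Metric.mem_closedBall, dist_zero_right]
      calc ‖x‖ = ‖(x - 1) + 1‖ := by rw [← he]
        _ ≤ max ‖x - 1‖ ‖(1:ℚ_[p])‖ := Padic.nonarchimedean _ _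
        _ ≤ 1 := by
            rw [max_le_iff, norm_one]
            exact ⟨le_trans hx'.le hpinv1, le_refl 1⟩
  have hdisj : Disjoint (Metric.closedBall (0:ℚ_[p]) ((p:ℝ)⁻¹)) B1 := by
    rw [Set.disjoint_left]
    intro x hx hx'
    simp only [Metric.mem_closedBall, dist_zero_right] at hx
    simp only [hB1, Metric.mem_ball, dist_eq_norm] at hx'
    have h1 : (1:ℝ) ≤ max ‖x - 1‖ ‖x‖ := by
      have he : (1:ℚ_[p]) = -(x - 1) + x := by ring
      calc (1:ℝ) = ‖(1:ℚ_[p])‖ := norm_one.symm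
        _ = ‖-(x - 1) + x‖ := by rw [← he]
        _ ≤ max ‖-(x - 1)‖ ‖x‖ := Padic.nonarchimedean _ _
        _ = max ‖x - 1‖ ‖x‖ := by rw [norm_neg]
    have hlt : (p:ℝ)⁻¹ < 1 := by
      have : (1:ℝ) < p := by exact_mod_cast hp.out.one_lt
      rw [inv_lt_one_iff₀]; right; exact this
    have : (1:ℝ) ≤ (p:ℝ)⁻¹ := le_trans h1 (max_le hx'.le hx)
    linarith
  have hunion : c0 + μp p B1 ≤ 1 := by
    rw [← measure_union hdisj Metric.isOpen_ball.measurableSet]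
    calc μp p (Metric.closedBall (0:ℚ_[p]) ((p:ℝ)⁻¹) ∪ B1)
        ≤ μp p (Metric.closedBall (0:ℚ_[p]) 1) := measure_mono hsub
      _ = 1 := Measure.addHaarMeasure_self (K₀ := unitBallPC p)
  have hB1pos : 0 < μp p B1 := Metric.measure_ball_pos _ _ hpinv
  have hc0top : c0 ≠ ∞ := by
    intro h
    rw [h] at hunion
    simp [ENNReal.add_eq_top] at hunion
  calc c0 < c0 + μp p B1 := ENNReal.lt_add_right hc0top hB1pos.ne'
    _ ≤ 1 := hunion

lemma norm_chi (x : ℚ_[p]) : ‖chi p x‖ = 1 := by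
  unfold chi
  have he : 2 * Real.pi * Complex.I * ((padicFract p x : ℚ) : ℂ)
      = ((2 * Real.pi * ((padicFract p x : ℚ) : ℝ) : ℝ) : ℂ) * Complex.I := by
    push_cast
    ring
  rw [he, Complex.norm_exp_ofReal_mul_I]

lemma nnnorm_chi (x : ℚ_[p]) : ‖chi p x‖₊ = 1 := by
  ext
  rw [coe_nnnorm, norm_chi, NNReal.coe_one]

lemma zero_mem_Ip : (0:ℚ_[p]) ∈ Ip p := ⟨0, 0, by norm_num, by simp⟩

lemma measure_scaling_ne_top (S : Set ℚ_[p]) (hS : IsScalingSet p S) : μp p S ≠ ⊤ := by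
  intro htop
  obtain ⟨hmeas, V, hMRA⟩ := hS
  set φ : ℚ_[p] → ℂ := invFT p (Set.indicator S 1) with hφ
  have horto := hMRA.orthonormal 0 (zero_mem_Ip p) 0 (zero_mem_Ip p)
  rw [if_pos rfl] at horto
  have hphi0 : ∀ ξ, φ ξ = 0 := by
    intro ξ
    rw [hφ]
    show ∫ x, chi p (-(ξ * x)) * Set.indicator S 1 x ∂(μp p) = 0
    apply integral_undef
    intro hint
    have hfin := hint.hasFiniteIntegral
    rw [HasFiniteIntegral] at hfin
    simp only [enorm_eq_nnnorm] at hfin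
    have heq : ∀ x : ℚ_[p],
        (‖chi p (-(ξ * x)) * Set.indicator S (1 : ℚ_[p] → ℂ) x‖₊ : ℝ≥0∞)
          = Set.indicator S (fun _ => (1:ℝ≥0∞)) x := by
      intro x
      by_cases hx : x ∈ S
      · simp [Set.indicator_of_mem hx, nnnorm_mul, nnnorm_chi]
      · simp [Set.indicator_of_notMem hx]
    rw [lintegral_congr heq, lintegral_indicator hmeas, setLIntegral_one, htop] at hfin
    exact (lt_irrefl _ hfin)
  have : (0:ℂ) = 1 := by
    rw [← horto]
    simp [hphi0]
  exact one_ne_zero this.symm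

/-- For a scaling set `S`, `lim_{n→∞} 1_{p^n S}(ξ) = 0`
for almost every `ξ ∈ ℚ_p`. -/
theorem stmt2 (S : Set ℚ_[p]) (hS : IsScalingSet p S) :
    ∀ᵐ ξ ∂(μp p),
      Tendsto (fun n : ℕ => Set.indicator (dil p ((p : ℚ_[p]) ^ n) S) (1 : ℚ_[p] → ℝ) ξ)
        atTop (𝓝 0) := by
  have hmeas := hS.1
  have hc01 := c0_lt_one p
  have hSfin : μp p S ≠ ⊤ := measure_scaling_ne_top p S hS
  set c0 := μp p (Metric.closedBall (0:ℚ_[p]) ((p:ℝ)⁻¹)) with hc0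
  set s : ℕ → Set ℚ_[p] := fun n => dil p ((p:ℚ_[p])^n) S with hs
  have hsn : ∀ n, μp p (s n) = c0 ^ n * μp p S := by
    intro n
    induction n with
    | zero =>
      simp only [hs, pow_zero, one_mul, dil]
      simp
    | succ n ih =>
      have hsmn : MeasurableSet (s n) := by
        have he : s n = (fun x => ((p:ℚ_[p])^n)⁻¹ * x) ⁻¹' S :=
          dil_eq_preimage p _ (pow_ne_zero n (pnz p)) S
        rw [he]
        exact (continuous_const.mul continuous_id).measurable hmeas
      have hstep : s (n+1) = dil p (p:ℚ_[p]) (s n) := by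
        show dil p ((p:ℚ_[p])^(n+1)) S = dil p (p:ℚ_[p]) (dil p ((p:ℚ_[p])^n) S)
        simp only [dil, Set.image_image]
        apply Set.image_congr'
        intro x
        ring
      rw [hstep, scale_meas p _ hsmn, ih, ← hc0, pow_succ]
      ring
  have htsum : ∑' n, μp p (s n) ≠ ⊤ := by
    have h1 : ∑' n : ℕ, μp p (s n) = (1 - c0)⁻¹ * μp p S := by
      simp only [hsn]
      rw [ENNReal.tsum_mul_right, ENNReal.tsum_geometric]
    rw [h1]
    refine ENNReal.mul_ne_top (ENNReal.inv_ne_top.mpr ?_) hSfin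
    rw [ne_eq, tsub_eq_zero_iff_le]
    exact not_le.mpr hc01
  have hlims := measure_limsup_atTop_eq_zero htsum
  rw [measure_eq_zero_iff_ae_notMem] at hlims
  filter_upwards [hlims] with ξ hξ
  rw [Filter.mem_limsup_iff_frequently_mem] at hξ
  have hev : ∀ᶠ n in atTop, ξ ∉ s n := Filter.not_frequently.mp hξ
  refine Tendsto.congr' ?_ tendsto_const_nhds
  filter_upwards [hev] with n hn
  exact (Set.indicator_of_notMem hn _).symm


end PadicScaling
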